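/- arXiv:math/0501389 — 4 statements merged into one kernel-verified Lean document; each statement's English description precedes it below -/
import Mathlib

section
/- For every real x with 0 < x < π, one has the series identity cot x − 1/x = ∑_{m=1}^∞ 2x/(x² − (mπ)²), with the series converging absolutely. -/
open Real Set Filter Topology

private lemma deriv_aux {c y : ℝ} (hc : c ≠ 0) (hne : y ^ 2 - c ^ 2 ≠ 0) :
    -(2 * y ^ 1 / c ^ 2) / (1 - y ^ 2 / c ^ 2) = 2 * y / (y ^ 2 - c ^ 2) := by
  have hc2 : c ^ 2 ≠ 0 := pow_ne_zero _ hc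
  have hb : 1 - y ^ 2 / c ^ 2 ≠ 0 := by
    intro h
    apply hne
    have : y ^ 2 / c ^ 2 = 1 := by linarith
    have := (div_eq_one_iff_eq hc2).mp this
    linarith
  rw [div_eq_div_iff hb hne]
  field_simp
  ring

private lemma inv_sub_one_aux {c y : ℝ} (hc : c ≠ 0) (hne : c ^ 2 - y ^ 2 ≠ 0) :
    (1 - y ^ 2 / c ^ 2)⁻¹ - 1 = y ^ 2 / (c ^ 2 - y ^ 2) := by
  have hc2 : c ^ 2 ≠ 0 := pow_ne_zero _ hc
  have h1 : 1 - y ^ 2 / c ^ 2 = (c ^ 2 - y ^ 2) / c ^ 2 := by field_simp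
  rw [h1, inv_div, div_sub_one hne]
  congr 1
  ring

private noncomputable def gfun (n : ℕ) (y : ℝ) : ℝ :=
  Real.log (1 - y ^ 2 / (((n : ℝ) + 1) * Real.pi) ^ 2)

private noncomputable def gfun' (n : ℕ) (y : ℝ) : ℝ :=
  2 * y / (y ^ 2 - (((n : ℝ) + 1) * Real.pi) ^ 2)

private lemma hn1 (n : ℕ) : (1:ℝ) ≤ (n:ℝ) + 1 := by
  have : (0:ℝ) ≤ (n:ℝ) := Nat.cast_nonneg n
  linarith

private lemma sq_lt (n : ℕ) {y : ℝ} (hy : y ∈ Ioo (0:ℝ) π) :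
    y ^ 2 < (((n : ℝ) + 1) * π) ^ 2 := by
  have h2 : y < ((n:ℝ)+1) * π := by
    have : π ≤ ((n:ℝ)+1) * π := le_mul_of_one_le_left pi_pos.le (hn1 n)
    linarith [hy.2]
  nlinarith [hy.1]

private lemma fac_pos (n : ℕ) {y : ℝ} (hy : y ∈ Ioo (0:ℝ) π) :
    0 < 1 - y ^ 2 / (((n : ℝ) + 1) * π) ^ 2 := by
  have hc : (0:ℝ) < (((n : ℝ) + 1) * π) ^ 2 := by positivity
  rw [sub_pos, div_lt_one hc]
  exact sq_lt n hy

private lemma cpos (n : ℕ) : (0:ℝ) < ((n : ℝ) + 1) * π := by positivity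

private lemma gfun_hasDeriv (n : ℕ) {y : ℝ} (hy : y ∈ Ioo (0:ℝ) π) :
    HasDerivAt (gfun n) (gfun' n y) y := by
  have hcpos := cpos n
  have hinner : HasDerivAt (fun z : ℝ => 1 - z ^ 2 / (((n : ℝ) + 1) * π) ^ 2)
      (-((2 * y ^ 1) / (((n : ℝ) + 1) * π) ^ 2)) y := by
    simpa using ((hasDerivAt_pow 2 y).div_const ((((n : ℝ) + 1) * π) ^ 2)).const_sub 1
  have hpos := fac_pos n hy
  have H := hinner.log hpos.ne'
  have hne : y ^ 2 - (((n : ℝ) + 1) * π) ^ 2 ≠ 0 := by nlinarith [sq_lt n hy]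
  have := deriv_aux hcpos.ne' hne
  rw [gfun']
  rw [← this]
  exact H

private lemma gfun_abs_le (n : ℕ) {y : ℝ} (hy : y ∈ Ioo (0:ℝ) π) :
    |gfun n y| ≤ y ^ 2 / (π ^ 2 - y ^ 2) * (1 / ((n : ℝ) + 1) ^ 2) := by
  have hpos := fac_pos n hy
  have hsq := sq_lt n hy
  have hy0 := hy.1
  have hyp := hy.2
  have hn := hn1 n
  have ht_nonneg : 0 ≤ y ^ 2 / (((n : ℝ) + 1) * π) ^ 2 := by positivity
  have hlog_nonpos : Real.log (1 - y ^ 2 / (((n : ℝ) + 1) * π) ^ 2) ≤ 0 :=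
    Real.log_nonpos (by linarith) (by linarith)
  have habs : |gfun n y| = - Real.log (1 - y ^ 2 / (((n : ℝ) + 1) * π) ^ 2) := by
    rw [gfun, abs_of_nonpos hlog_nonpos]
  rw [habs, ← Real.log_inv]
  have hinv_pos : (0:ℝ) < (1 - y ^ 2 / (((n : ℝ) + 1) * π) ^ 2)⁻¹ := by positivity
  have h1 := Real.log_le_sub_one_of_pos hinv_pos
  have hne : (((n : ℝ) + 1) * π) ^ 2 - y ^ 2 ≠ 0 := by nlinarith
  have h2 := inv_sub_one_aux (cpos n).ne' hne
  have hpy : (0:ℝ) < π ^ 2 - y ^ 2 := by nlinarith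
  have h3 : y ^ 2 / ((((n : ℝ) + 1) * π) ^ 2 - y ^ 2)
      ≤ y ^ 2 / (((n:ℝ)+1) ^ 2 * (π ^ 2 - y ^ 2)) := by
    apply div_le_div_of_nonneg_left (sq_nonneg y)
    · positivity
    · nlinarith [mul_nonneg (by nlinarith : (0:ℝ) ≤ ((n:ℝ)+1) ^ 2 - 1) (sq_nonneg y)]
  calc Real.log (1 - y ^ 2 / (((n : ℝ) + 1) * π) ^ 2)⁻¹
      ≤ (1 - y ^ 2 / (((n : ℝ) + 1) * π) ^ 2)⁻¹ - 1 := h1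
    _ = y ^ 2 / ((((n : ℝ) + 1) * π) ^ 2 - y ^ 2) := h2
    _ ≤ y ^ 2 / (((n:ℝ)+1) ^ 2 * (π ^ 2 - y ^ 2)) := h3
    _ = y ^ 2 / (π ^ 2 - y ^ 2) * (1 / ((n : ℝ) + 1) ^ 2) := by
        rw [div_mul_div_comm, mul_one, mul_comm]

private lemma base_summable : Summable (fun n : ℕ => 1 / ((n : ℝ) + 1) ^ 2) := by
  have h : Summable (fun n : ℕ => 1 / (n : ℝ) ^ 2) := summable_one_div_nat_pow.mpr one_lt_two
  exact_mod_cast (summable_nat_add_iff 1).2 h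

private lemma gfun_summable {y : ℝ} (hy : y ∈ Ioo (0:ℝ) π) :
    Summable (fun n => gfun n y) := by
  apply Summable.of_abs
  apply Summable.of_nonneg_of_le (fun n => abs_nonneg _) (fun n => gfun_abs_le n hy)
  exact base_summable.mul_left _

private lemma gfun_hasSum {y : ℝ} (hy : y ∈ Ioo (0:ℝ) π) :
    HasSum (fun n => gfun n y) (Real.log (Real.sin y) - Real.log y) := by
  have hs := gfun_summable hy
  have hsin : 0 < Real.sin y := Real.sin_pos_of_pos_of_lt_pi hy.1 hy.2
  have heuler := Real.tendsto_euler_sin_prod (y / π)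
  have hpi : (π : ℝ) ≠ 0 := pi_ne_zero
  have hP : Tendsto (fun n : ℕ => y * ∏ j ∈ Finset.range n,
      (1 - y ^ 2 / (((j : ℝ) + 1) * π) ^ 2)) atTop (𝓝 (Real.sin y)) := by
    have h1 : π * (y / π) = y := by field_simp
    have h2 : ∀ j : ℕ, (1 : ℝ) - (y / π) ^ 2 / ((j : ℝ) + 1) ^ 2
        = 1 - y ^ 2 / (((j : ℝ) + 1) * π) ^ 2 := by
      intro j
      have hj : (((j:ℝ)+1)) ≠ 0 := by positivity
      rw [div_pow, div_div, mul_pow, mul_comm (π ^ 2) _]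
    simpa only [h1, h2] using heuler
  have hlogP : Tendsto (fun n : ℕ => Real.log (y * ∏ j ∈ Finset.range n,
      (1 - y ^ 2 / (((j : ℝ) + 1) * π) ^ 2))) atTop (𝓝 (Real.log (Real.sin y))) :=
    ((Real.continuousAt_log hsin.ne').tendsto).comp hP
  have hlog_eq : ∀ n : ℕ, Real.log (y * ∏ j ∈ Finset.range n,
      (1 - y ^ 2 / (((j : ℝ) + 1) * π) ^ 2))
      = Real.log y + ∑ j ∈ Finset.range n, gfun j y := by
    intro n
    have hprod_pos : 0 < ∏ j ∈ Finset.range n, (1 - y ^ 2 / (((j : ℝ) + 1) * π) ^ 2) :=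
      Finset.prod_pos fun j _ => fac_pos j hy
    rw [Real.log_mul hy.1.ne' hprod_pos.ne',
      Real.log_prod (fun j _ => (fac_pos j hy).ne')]
    rfl
  have hsum_tendsto : Tendsto (fun n : ℕ => ∑ j ∈ Finset.range n, gfun j y) atTop
      (𝓝 (Real.log (Real.sin y) - Real.log y)) := by
    have h5 := hlogP
    simp only [hlog_eq] at h5
    have h6 := h5.sub_const (Real.log y)
    simpa using h6
  have h2 := hs.hasSum.tendsto_sum_nat
  have h7 : ∑' n, gfun n y = Real.log (Real.sin y) - Real.log y :=
    tendsto_nhds_unique h2 hsum_tendsto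
  rw [← h7]
  exact hs.hasSum

theorem cot_sub_inv_eq_tsum (x : ℝ) (hx0 : 0 < x) (hxpi : x < Real.pi) :
    Summable (fun m : ℕ+ => |2 * x / (x ^ 2 - (m * Real.pi) ^ 2)|) ∧
    Real.cos x / Real.sin x - 1 / x
      = ∑' m : ℕ+, 2 * x / (x ^ 2 - (m * Real.pi) ^ 2) := by
  have hpi := pi_pos
  set b : ℝ := (x + π) / 2 with hb
  have hbpi : b < π := by rw [hb]; linarith
  have hb0 : 0 < b := by rw [hb]; linarith
  set t : Set ℝ := Ioo (x / 2) b with ht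
  have htsub : t ⊆ Ioo (0:ℝ) π := fun z hz => ⟨by linarith [hz.1], by linarith [hz.2]⟩
  have hxt : x ∈ t := ⟨by linarith, by rw [hb]; linarith⟩
  set u : ℕ → ℝ := fun n => (2 * b / (π ^ 2 - b ^ 2)) * (1 / ((n : ℝ) + 1) ^ 2) with hu_def
  have hu : Summable u := base_summable.mul_left _
  have hpb : (0:ℝ) < π ^ 2 - b ^ 2 := by nlinarith
  have hbound : ∀ n : ℕ, ∀ y ∈ t, ‖gfun' n y‖ ≤ u n := by
    intro n y hyt
    have hy := htsub hyt
    have hn := hn1 n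
    have hsq := sq_lt n hy
    have hy0 := hy.1
    have hyb : y < b := hyt.2
    have hden_pos : 0 < (((n:ℝ)+1) * π) ^ 2 - y ^ 2 := by linarith
    have habs : ‖gfun' n y‖ = 2 * y / ((((n:ℝ)+1) * π) ^ 2 - y ^ 2) := by
      rw [gfun', Real.norm_eq_abs, abs_div, abs_of_pos (by linarith : (0:ℝ) < 2 * y),
        abs_of_neg (by linarith : y ^ 2 - (((n:ℝ)+1) * π) ^ 2 < 0)]
      rw [neg_sub]
    rw [habs, hu_def]
    have hd2 : 0 < ((n:ℝ)+1) ^ 2 * (π ^ 2 - b ^ 2) := by positivity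
    have hstep : 2 * y / ((((n:ℝ)+1) * π) ^ 2 - y ^ 2)
        ≤ 2 * b / (((n:ℝ)+1) ^ 2 * (π ^ 2 - b ^ 2)) := by
      apply div_le_div₀ (by linarith) (by linarith) hd2
      nlinarith [mul_nonneg (by nlinarith : (0:ℝ) ≤ ((n:ℝ)+1) ^ 2 - 1) (sq_nonneg b)]
    calc 2 * y / ((((n:ℝ)+1) * π) ^ 2 - y ^ 2)
        ≤ 2 * b / (((n:ℝ)+1) ^ 2 * (π ^ 2 - b ^ 2)) := hstep
      _ = 2 * b / (π ^ 2 - b ^ 2) * (1 / ((n : ℝ) + 1) ^ 2) := by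
          rw [div_mul_div_comm, mul_one, mul_comm (((n:ℝ)+1) ^ 2) _]
  have HD : HasDerivAt (fun z => ∑' n, gfun n z) (∑' n, gfun' n x) x := by
    refine hasDerivAt_tsum_of_isPreconnected hu isOpen_Ioo isPreconnected_Ioo
      (fun n y hy => gfun_hasDeriv n (htsub hy)) hbound hxt ?_ hxt
    exact gfun_summable (htsub hxt)
  have heq : (fun z => ∑' n, gfun n z) =ᶠ[𝓝 x]
      (fun z => Real.log (Real.sin z) - Real.log z) := by
    filter_upwards [Ioo_mem_nhds hx0 hxpi] with z hz
    exact (gfun_hasSum hz).tsum_eq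
  have H1 : HasDerivAt (fun z => Real.log (Real.sin z) - Real.log z)
      (∑' n, gfun' n x) x := HD.congr_of_eventuallyEq heq.symm
  have hsinx : 0 < Real.sin x := Real.sin_pos_of_pos_of_lt_pi hx0 hxpi
  have H2 : HasDerivAt (fun z => Real.log (Real.sin z) - Real.log z)
      (Real.cos x / Real.sin x - 1 / x) x := by
    have h1 : HasDerivAt (fun z => Real.log (Real.sin z)) (Real.cos x / Real.sin x) x :=
      (Real.hasDerivAt_sin x).log hsinx.ne'
    have h2 : HasDerivAt Real.log x⁻¹ x := Real.hasDerivAt_log hx0.ne'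
    rw [one_div]
    exact h1.sub h2
  have key : Real.cos x / Real.sin x - 1 / x = ∑' n, gfun' n x := H2.unique H1
  have Sabs : Summable (fun n : ℕ => |gfun' n x|) := by
    apply Summable.of_nonneg_of_le (fun n => abs_nonneg _) (fun n => ?_) hu
    simpa [Real.norm_eq_abs] using hbound n x hxt
  set e : ℕ ≃ ℕ+ := Equiv.pnatEquivNat.symm with he
  have hcomp : ∀ n : ℕ,
      (2 * x / (x ^ 2 - ((e n : ℝ) * π) ^ 2)) = gfun' n x := by
    intro n
    have h9 : ((e n : ℕ+) : ℝ) = (n : ℝ) + 1 := by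
      simp [he, Equiv.pnatEquivNat]
    rw [gfun', h9]
  constructor
  · rw [← e.summable_iff]
    refine Sabs.congr fun n => ?_
    simp only [Function.comp_apply]
    rw [hcomp n]
  · rw [key, ← e.tsum_eq (fun m : ℕ+ => 2 * x / (x ^ 2 - ((m : ℝ) * π) ^ 2))]
    exact tsum_congr fun n => (hcomp n).symm
end

section
/- For every real x with 0 ≤ x < π, log(sin x / x) = −∑_{j=1}^∞ c_j x^{2j}, where c_j = (1/(j π^{2j})) ∑_{m=1}^∞ 1/m^{2j}, and the series converges; at x = 0 the left side is interpreted as 0 (since sin x / x → 1). -/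
open Real Filter Finset

/-- The coefficient `c_j = ζ(2j)/(j π^{2j})`. -/
noncomputable def cCoeff (j : ℕ+) : ℝ :=
  (1 / (j * Real.pi ^ (2 * (j : ℕ)))) * ∑' m : ℕ+, 1 / (m : ℝ) ^ (2 * (j : ℕ))

theorem log_sin_div_eq_neg_tsum (x : ℝ) (hx0 : 0 ≤ x) (hxpi : x < Real.pi) :
    Summable (fun j : ℕ+ => cCoeff j * x ^ (2 * (j : ℕ))) ∧
    Real.log (Real.sin x / x) = -∑' j : ℕ+, cCoeff j * x ^ (2 * (j : ℕ)) := by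
  rcases hx0.eq_or_lt with rfl | hx
  · have h0 : (fun j : ℕ+ => cCoeff j * (0:ℝ) ^ (2 * (j : ℕ))) = fun _ => (0:ℝ) := by
      funext j
      have : 2 * (j:ℕ) ≠ 0 := by positivity
      simp [zero_pow this]
    rw [h0]
    refine ⟨summable_zero, ?_⟩
    simp
  -- now 0 < x < π
  have hπ : (0:ℝ) < π := Real.pi_pos
  -- the quantities r m = x^2/(π^2 m^2)
  set r : ℕ+ → ℝ := fun m => x ^ 2 / (π ^ 2 * (m:ℝ) ^ 2) with hr
  have hr_pos : ∀ m, 0 < r m := fun m => by positivity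
  have hr_le : ∀ m : ℕ+, r m ≤ r 1 := by
    intro m
    have h1 : (1:ℝ) ≤ (m:ℝ) := by exact_mod_cast m.one_le
    simp only [hr, PNat.one_coe, Nat.cast_one, one_pow, mul_one]
    gcongr
    have hm2 : (1:ℝ) ≤ (m:ℝ) ^ 2 := by nlinarith
    nlinarith [mul_le_mul_of_nonneg_left hm2 (sq_nonneg π)]
  have hr1_lt : r 1 < 1 := by
    have : x ^ 2 < π ^ 2 := by nlinarith
    rw [hr]
    simp only [PNat.one_coe, Nat.cast_one, one_pow, mul_one]
    rw [div_lt_one (by positivity)]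
    exact this
  have hr_lt : ∀ m, r m < 1 := fun m => lt_of_le_of_lt (hr_le m) hr1_lt
  -- the double family
  set F : ℕ+ × ℕ+ → ℝ := fun p => r p.1 ^ (p.2 : ℕ) / (p.2 : ℕ) with hF
  have hF_nonneg : 0 ≤ F := fun p => by
    have := (hr_pos p.1).le
    positivity
  -- rows: HasSum (fun k => F (m,k)) (-log (1 - r m))
  have hrow : ∀ m : ℕ+, HasSum (fun k : ℕ+ => F (m, k)) (-Real.log (1 - r m)) := by
    intro m
    have h := hasSum_pow_div_log_of_abs_lt_one
      (x := r m) (by rw [abs_of_pos (hr_pos m)]; exact hr_lt m)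
    have := (Equiv.pnatEquivNat.symm.hasSum_iff
      (f := fun k : ℕ+ => F (m, k)) (a := -Real.log (1 - r m))).mp ?_
    · exact this
    · convert h using 1
      funext n
      simp [hF, Equiv.pnatEquivNat, Nat.succPNat]
  -- row sums are summable
  have hlog_nonneg : ∀ m : ℕ+, 0 ≤ -Real.log (1 - r m) := by
    intro m
    have h1 : 1 - r m ≤ 1 := by linarith [hr_pos m]
    have h0 : 0 < 1 - r m := by linarith [hr_lt m]
    have := Real.log_nonpos h0.le h1
    linarith
  have hlog_le : ∀ m : ℕ+, -Real.log (1 - r m) ≤ (x ^ 2 / (π ^ 2 * (1 - r 1))) * (1 / (m:ℝ) ^ 2) := by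
    intro m
    have h0 : 0 < 1 - r m := by linarith [hr_lt m]
    have h01 : 0 < 1 - r 1 := by linarith [hr1_lt]
    have key : Real.log (1 / (1 - r m)) ≤ 1 / (1 - r m) - 1 :=
      Real.log_le_sub_one_of_pos (by positivity)
    rw [Real.log_div one_ne_zero h0.ne', Real.log_one, zero_sub] at key
    have e1 : 1 / (1 - r m) - 1 = r m / (1 - r m) := by field_simp; ring
    rw [e1] at key
    refine key.trans ?_
    have e2 : r m / (1 - r m) ≤ r m / (1 - r 1) :=
      div_le_div_of_nonneg_left (hr_pos m).le h01 (by linarith [hr_le m])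
    refine e2.trans_eq ?_
    have e3 : ∀ c : ℝ, c ≠ 0 → r m / c = (x ^ 2 / (π ^ 2 * c)) * (1 / (m:ℝ) ^ 2) := by
      intro c hc
      have hm : ((m:ℝ)) ≠ 0 := by positivity
      simp only [hr]
      field_simp
    exact e3 _ h01.ne'
  have hsum_inv_sq : Summable fun m : ℕ+ => 1 / (m:ℝ) ^ 2 := by
    rw [← Equiv.pnatEquivNat.symm.summable_iff]
    have : ((fun m : ℕ+ => 1 / (m:ℝ) ^ 2) ∘ Equiv.pnatEquivNat.symm)
        = fun n : ℕ => 1 / ((n:ℝ) + 1) ^ 2 := by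
      funext n
      simp [Equiv.pnatEquivNat, Nat.succPNat]
    rw [this]
    have := (summable_nat_add_iff (f := fun n : ℕ => 1 / (n:ℝ) ^ 2) 1).mpr
      (Real.summable_one_div_nat_pow.mpr one_lt_two)
    convert this using 2 with n
    · rfl
    · push_cast
      rfl
  have hsum_log : Summable fun m : ℕ+ => -Real.log (1 - r m) :=
    Summable.of_nonneg_of_le hlog_nonneg hlog_le (hsum_inv_sq.mul_left _)
  -- the full double sum is summable
  have hFsum : Summable F := by
    rw [summable_prod_of_nonneg hF_nonneg]
    exact ⟨fun m => (hrow m).summable, hsum_log.congr fun m => ((hrow m).tsum_eq).symm⟩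
  -- column sums equal cCoeff j * x^(2j)
  have hcol_eq : ∀ j : ℕ+, (∑' m : ℕ+, F (m, j)) = cCoeff j * x ^ (2 * (j : ℕ)) := by
    intro j
    have e : ∀ m : ℕ+, F (m, j)
        = (x ^ (2 * (j:ℕ)) / ((j:ℝ) * π ^ (2 * (j:ℕ)))) * (1 / (m:ℝ) ^ (2 * (j:ℕ))) := by
      intro m
      have hm : (0:ℝ) < (m:ℝ) := by exact_mod_cast m.pos
      simp only [hF, hr]
      rw [div_pow, mul_pow, ← pow_mul, ← pow_mul, ← pow_mul]
      rw [mul_comm 2 (j:ℕ)]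
      field_simp
    rw [tsum_congr e, tsum_mul_left, cCoeff]
    have hj : (0:ℝ) < (j:ℝ) := by exact_mod_cast j.pos
    rw [mul_comm 2 (j:ℕ)]
    field_simp
  -- log (sin x / x) = ∑' m, log (1 - r m)
  have hsinpos : 0 < Real.sin x / x := div_pos (Real.sin_pos_of_pos_of_lt_pi hx hxpi) hx
  have hG : Summable fun n : ℕ => Real.log (1 - r (Nat.succPNat n)) := by
    have := hsum_log.neg
    simp only [neg_neg] at this
    rw [← Equiv.pnatEquivNat.symm.summable_iff] at this
    exact this
  have hlim : Tendsto (fun n : ℕ => ∑ i ∈ range n, Real.log (1 - r (Nat.succPNat i)))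
      atTop (nhds (Real.log (Real.sin x / x))) := by
    have heuler := Real.tendsto_euler_sin_prod (x / π)
    have hxπ : π * (x / π) = x := by field_simp
    rw [hxπ] at heuler
    have hprod : Tendsto (fun n : ℕ => ∏ i ∈ range n, (1 - r (Nat.succPNat i)))
        atTop (nhds (Real.sin x / x)) := by
      have := heuler.div_const x
      refine this.congr fun n => ?_
      rw [mul_comm, mul_div_assoc, div_self hx.ne', mul_one]
      refine Finset.prod_congr rfl fun i _ => ?_
      have hcoe : ((Nat.succPNat i : ℕ+) : ℝ) = (i:ℝ) + 1 := by
        simp [Nat.succPNat]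
      simp only [hr]
      rw [hcoe, div_pow, div_div]
    have hcont : ContinuousAt Real.log (Real.sin x / x) :=
      Real.continuousAt_log hsinpos.ne'
    have := (hcont.tendsto.comp hprod)
    refine this.congr fun n => ?_
    simp only [Function.comp_apply]
    rw [Real.log_prod]
    intro i _
    have := hr_lt (Nat.succPNat i)
    linarith
  have hHasSumG : HasSum (fun n : ℕ => Real.log (1 - r (Nat.succPNat n)))
      (Real.log (Real.sin x / x)) := by
    rw [hG.hasSum_iff_tendsto_nat]
    exact hlim
  have hlogeq : Real.log (Real.sin x / x) = ∑' m : ℕ+, Real.log (1 - r m) := by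
    rw [← hHasSumG.tsum_eq, ← Equiv.pnatEquivNat.symm.tsum_eq (f := fun m : ℕ+ => Real.log (1 - r m))]
    rfl
  -- assemble
  constructor
  · have := ((summable_prod_of_nonneg (f := fun p : ℕ+ × ℕ+ => F (p.2, p.1))
      (fun p => hF_nonneg (p.2, p.1))).mp ?_).2
    · exact this.congr fun j => hcol_eq j
    · exact ((Equiv.prodComm ℕ+ ℕ+).summable_iff (f := F)).mpr hFsum
  · rw [hlogeq]
    have step1 : ∀ m : ℕ+, Real.log (1 - r m) = -∑' k : ℕ+, F (m, k) := by
      intro m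
      rw [(hrow m).tsum_eq]
      ring
    rw [tsum_congr step1, tsum_neg]
    congr 1
    rw [tsum_congr fun j => (hcol_eq j).symm]
    exact (Summable.tsum_comm (f := fun m k : ℕ+ => F (m, k)) hFsum).symm
end

section
/- For every real x with 0 < x ≤ π, one has log(sin x / x) ≤ −x²/6, where at x = π the left side is interpreted as −∞ (i.e., sin x / x ≤ exp(−x²/6) for 0 < x ≤ π). -/
open Real Filter Finset

theorem sin_div_le_exp_neg_sq_div_six (x : ℝ) (hx0 : 0 < x) (hxpi : x ≤ Real.pi) :
    Real.sin x / x ≤ Real.exp (-x ^ 2 / 6) := by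
  set t : ℝ := x / Real.pi with ht
  have hpi : (0:ℝ) < Real.pi := Real.pi_pos
  have ht0 : 0 < t := div_pos hx0 hpi
  have ht1 : t ≤ 1 := (div_le_one hpi).2 hxpi
  have hx : x = Real.pi * t := by rw [ht]; field_simp
  -- partial products tend to sin x / x
  have hP : Tendsto (fun n : ℕ => ∏ j ∈ Finset.range n, ((1 : ℝ) - t ^ 2 / ((j : ℝ) + 1) ^ 2))
      atTop (nhds (Real.sin x / x)) := by
    have h := Real.tendsto_euler_sin_prod t
    rw [← hx] at h
    have := h.div_const x
    refine this.congr fun n => ?_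
    rw [hx]
    field_simp
  -- partial exponentials tend to exp(-x^2/6)
  have hS : Tendsto (fun n : ℕ => ∑ j ∈ Finset.range n, (1 : ℝ) / ((j : ℝ) + 1) ^ 2)
      atTop (nhds (Real.pi ^ 2 / 6)) := by
    have h := hasSum_zeta_two.tendsto_sum_nat
    have hshift := h.comp (tendsto_add_atTop_nat 1)
    refine hshift.congr fun n => ?_
    simp only [Function.comp_apply]
    rw [Finset.sum_range_succ']
    simp
  have hE : Tendsto (fun n : ℕ => Real.exp (-t ^ 2 * ∑ j ∈ Finset.range n, (1 : ℝ) / ((j : ℝ) + 1) ^ 2))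
      atTop (nhds (Real.exp (-x ^ 2 / 6))) := by
    have : Tendsto (fun n : ℕ => -t ^ 2 * ∑ j ∈ Finset.range n, (1 : ℝ) / ((j : ℝ) + 1) ^ 2)
        atTop (nhds (-t ^ 2 * (Real.pi ^ 2 / 6))) := (hS.const_mul _)
    have heq : -t ^ 2 * (Real.pi ^ 2 / 6) = -x ^ 2 / 6 := by
      rw [hx]; ring
    rw [heq] at this
    exact (Real.continuous_exp.tendsto _).comp this
  refine le_of_tendsto_of_tendsto' hP hE fun n => ?_
  rw [Finset.mul_sum, Real.exp_sum]
  refine Finset.prod_le_prod (fun j _ => ?_) (fun j _ => ?_)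
  · have h1 : t ^ 2 ≤ 1 := by nlinarith
    have h2 : (1:ℝ) ≤ ((j : ℝ) + 1) ^ 2 := by nlinarith [Nat.cast_nonneg (α := ℝ) j]
    have : t ^ 2 / ((j : ℝ) + 1) ^ 2 ≤ 1 := by
      rw [div_le_one (by positivity)]; linarith
    linarith
  · have heq : -t ^ 2 * (1 / ((j : ℝ) + 1) ^ 2) = -(t ^ 2 / ((j : ℝ) + 1) ^ 2) := by ring
    rw [heq]
    linarith [Real.add_one_le_exp (-(t ^ 2 / ((j : ℝ) + 1) ^ 2))]
end

section
/- Let k > 0, θ ∈ (0,1), and 0 ≤ d ≤ π/√k. Define S_k(d) := sin(√k d)/(√k d) for d > 0 and S_k(0) := 1, and Φ(d) := (n−1)(log S_k(d) − (1−θ) log S_k((1−θ)d) − θ log S_k(θd)) for a positive integer n ≥ 2. Then Φ(d) ≤ −((n−1)k/2)·θ(1−θ)·d², provided d < π/√k (so that all logarithms are finite). -/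
open Real Set

lemma q_nonneg {x : ℝ} (h0 : 0 ≤ x) (hπ : x ≤ Real.pi) :
    0 ≤ Real.sin x - x * Real.cos x := by
  have hmono : MonotoneOn (fun x => Real.sin x - x * Real.cos x) (Icc 0 Real.pi) := by
    apply monotoneOn_of_deriv_nonneg (convex_Icc _ _)
    · fun_prop
    · intro y hy
      have h : HasDerivAt (fun x => Real.sin x - x * Real.cos x) (y * Real.sin y) y := by
        have := (Real.hasDerivAt_sin y).sub ((hasDerivAt_id y).mul (Real.hasDerivAt_cos y))
        exact this.congr_deriv (by simp only [id_eq]; ring)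
      exact h.differentiableAt.differentiableWithinAt
    · intro y hy
      rw [interior_Icc] at hy
      have h : HasDerivAt (fun x => Real.sin x - x * Real.cos x) (y * Real.sin y) y := by
        have := (Real.hasDerivAt_sin y).sub ((hasDerivAt_id y).mul (Real.hasDerivAt_cos y))
        exact this.congr_deriv (by simp only [id_eq]; ring)
      rw [h.deriv]
      exact mul_nonneg hy.1.le (Real.sin_nonneg_of_nonneg_of_le_pi hy.1.le hy.2.le)
  have := hmono (Set.mem_Icc.mpr ⟨le_refl 0, Real.pi_pos.le⟩) (Set.mem_Icc.mpr ⟨h0, hπ⟩) h0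
  simpa using this

lemma p_nonneg {x : ℝ} (h0 : 0 ≤ x) (hπ : x ≤ Real.pi) :
    0 ≤ Real.sin x - x ^ 2 * Real.sin x / 3 - x * Real.cos x := by
  have hmono : MonotoneOn (fun x => Real.sin x - x ^ 2 * Real.sin x / 3 - x * Real.cos x)
      (Icc 0 Real.pi) := by
    apply monotoneOn_of_deriv_nonneg (convex_Icc _ _)
    · fun_prop
    · intro y hy
      have h : HasDerivAt (fun x => Real.sin x - x ^ 2 * Real.sin x / 3 - x * Real.cos x)
          (y / 3 * (Real.sin y - y * Real.cos y)) y := by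
        have := ((Real.hasDerivAt_sin y).sub
          ((((hasDerivAt_pow 2 y).mul (Real.hasDerivAt_sin y)).div_const 3))).sub
          ((hasDerivAt_id y).mul (Real.hasDerivAt_cos y))
        exact this.congr_deriv (by simp only [id_eq]; ring)
      exact h.differentiableAt.differentiableWithinAt
    · intro y hy
      rw [interior_Icc] at hy
      have h : HasDerivAt (fun x => Real.sin x - x ^ 2 * Real.sin x / 3 - x * Real.cos x)
          (y / 3 * (Real.sin y - y * Real.cos y)) y := by
        have := ((Real.hasDerivAt_sin y).sub
          ((((hasDerivAt_pow 2 y).mul (Real.hasDerivAt_sin y)).div_const 3))).sub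
          ((hasDerivAt_id y).mul (Real.hasDerivAt_cos y))
        exact this.congr_deriv (by simp only [id_eq]; ring)
      rw [h.deriv]
      exact mul_nonneg (by linarith [hy.1] : (0:ℝ) ≤ y / 3) (q_nonneg hy.1.le hy.2.le)
  have := hmono (Set.mem_Icc.mpr ⟨le_refl 0, Real.pi_pos.le⟩) (Set.mem_Icc.mpr ⟨h0, hπ⟩) h0
  simpa using this

lemma g_antitone :
    AntitoneOn (fun x => Real.log (Real.sin x) - Real.log x + x ^ 2 / 6)
      (Ioo 0 Real.pi) := by
  apply antitoneOn_of_deriv_nonpos (convex_Ioo _ _)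
  · apply ContinuousOn.add (ContinuousOn.sub ?_ ?_) (by fun_prop)
    · apply Real.continuousOn_log.comp Real.continuous_sin.continuousOn
      intro y hy
      exact ne_of_gt (Real.sin_pos_of_pos_of_lt_pi hy.1 hy.2)
    · exact Real.continuousOn_log.mono (fun y hy => ne_of_gt hy.1)
  · rw [interior_Ioo]
    intro y hy
    have hs : 0 < Real.sin y := Real.sin_pos_of_pos_of_lt_pi hy.1 hy.2
    have h1 : HasDerivAt (fun x => Real.log (Real.sin x)) (Real.cos y / Real.sin y) y :=
      (Real.hasDerivAt_sin y).log hs.ne'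
    have h2 : HasDerivAt Real.log y⁻¹ y := Real.hasDerivAt_log hy.1.ne'
    have h3 : HasDerivAt (fun x : ℝ => x ^ 2 / 6) (2 * y ^ 1 / 6) y :=
      (hasDerivAt_pow 2 y).div_const 6
    exact ((h1.sub h2).add h3).differentiableAt.differentiableWithinAt
  · rw [interior_Ioo]
    intro y hy
    have hs : 0 < Real.sin y := Real.sin_pos_of_pos_of_lt_pi hy.1 hy.2
    have h1 : HasDerivAt (fun x => Real.log (Real.sin x)) (Real.cos y / Real.sin y) y :=
      (Real.hasDerivAt_sin y).log hs.ne'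
    have h2 : HasDerivAt Real.log y⁻¹ y := Real.hasDerivAt_log hy.1.ne'
    have h3 : HasDerivAt (fun x : ℝ => x ^ 2 / 6) (2 * y ^ 1 / 6) y :=
      (hasDerivAt_pow 2 y).div_const 6
    rw [HasDerivAt.deriv (f := fun x => Real.log (Real.sin x) - Real.log x + x ^ 2 / 6) ((h1.sub h2).add h3)]
    have hp := p_nonneg hy.1.le hy.2.le
    have hc : Real.cos y / Real.sin y * Real.sin y = Real.cos y := div_mul_cancel₀ _ hs.ne'
    have hi : y⁻¹ * y = 1 := inv_mul_cancel₀ hy.1.ne'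
    nlinarith [mul_pos hy.1 hs, mul_le_mul_of_nonneg_left hp (le_of_lt hy.1),
      mul_pos (mul_pos hy.1 hy.1) hs]

lemma core {x θ : ℝ} (hx0 : 0 < x) (hxπ : x < Real.pi) (hθ0 : 0 < θ) (hθ1 : θ < 1) :
    Real.log (Real.sin x / x) - (1 - θ) * Real.log (Real.sin ((1 - θ) * x) / ((1 - θ) * x))
      - θ * Real.log (Real.sin (θ * x) / (θ * x)) ≤ -(θ * (1 - θ) / 2) * x ^ 2 := by
  have hθ' : 0 < 1 - θ := by linarith
  have hy1 : (1 - θ) * x ∈ Ioo 0 Real.pi :=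
    ⟨mul_pos hθ' hx0, lt_of_le_of_lt (by nlinarith) hxπ⟩
  have hy2 : θ * x ∈ Ioo 0 Real.pi :=
    ⟨mul_pos hθ0 hx0, lt_of_le_of_lt (by nlinarith) hxπ⟩
  have hxm : x ∈ Ioo 0 Real.pi := ⟨hx0, hxπ⟩
  have m1 := g_antitone hy1 hxm (by nlinarith)
  have m2 := g_antitone hy2 hxm (by nlinarith)
  simp only at m1 m2
  have hlog : ∀ y : ℝ, y ∈ Ioo 0 Real.pi →
      Real.log (Real.sin y / y) = Real.log (Real.sin y) - Real.log y := fun y hy =>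
    Real.log_div (ne_of_gt (Real.sin_pos_of_pos_of_lt_pi hy.1 hy.2)) (ne_of_gt hy.1)
  rw [hlog _ hxm, hlog _ hy1, hlog _ hy2]
  nlinarith [mul_le_mul_of_nonneg_left m1 hθ'.le, mul_le_mul_of_nonneg_left m2 hθ0.le]

/-- `S_k(d) = sin(√k d)/(√k d)` for `d ≠ 0`, and `S_k(0) = 1`. -/
noncomputable def Sk (k d : ℝ) : ℝ :=
  if d = 0 then 1 else Real.sin (Real.sqrt k * d) / (Real.sqrt k * d)

theorem Phi_le (n : ℕ) (hn : 2 ≤ n) (k : ℝ) (hk : 0 < k)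
    (θ : ℝ) (hθ0 : 0 < θ) (hθ1 : θ < 1)
    (d : ℝ) (hd0 : 0 ≤ d) (hd : d < Real.pi / Real.sqrt k) :
    (n - 1 : ℝ) * (Real.log (Sk k d)
        - (1 - θ) * Real.log (Sk k ((1 - θ) * d))
        - θ * Real.log (Sk k (θ * d)))
      ≤ -((n - 1 : ℝ) * k / 2) * θ * (1 - θ) * d ^ 2 := by
  have hn' : (1:ℝ) ≤ (n:ℝ) - 1 := by
    have : (2:ℝ) ≤ (n:ℝ) := by exact_mod_cast hn
    linarith
  have hsk : 0 < Real.sqrt k := Real.sqrt_pos.mpr hk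
  rcases eq_or_lt_of_le hd0 with h0 | h0
  · rw [← h0]
    simp [Sk]
  · set x := Real.sqrt k * d with hxdef
    have hx0 : 0 < x := mul_pos hsk h0
    have hxπ : x < Real.pi := by
      rw [lt_div_iff₀ hsk] at hd
      rw [hxdef]; nlinarith
    have hS1 : Sk k d = Real.sin x / x := by
      rw [Sk, if_neg h0.ne']
    have hS2 : Sk k ((1 - θ) * d) = Real.sin ((1 - θ) * x) / ((1 - θ) * x) := by
      have hθ' : 0 < 1 - θ := by linarith
      rw [Sk, if_neg (by positivity : (1 - θ) * d ≠ 0)]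
      rw [hxdef]; ring_nf
    have hS3 : Sk k (θ * d) = Real.sin (θ * x) / (θ * x) := by
      rw [Sk, if_neg (by positivity : θ * d ≠ 0)]
      rw [hxdef]; ring_nf
    rw [hS1, hS2, hS3]
    have key := core hx0 hxπ hθ0 hθ1
    have hx2 : x ^ 2 = k * d ^ 2 := by
      rw [hxdef, mul_pow, Real.sq_sqrt hk.le]
    have h2 := mul_le_mul_of_nonneg_left key (by linarith : (0:ℝ) ≤ (n:ℝ) - 1)
    rw [hx2] at h2
    nlinarith [h2]
end
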